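/- In the abstract discrete Biot setting with error sequences, there is a constant C > 0 depending only on γ_a, C_a, C_b and β_S (independent of κ, c₀, τ and N) such that for every 1 ≤ m ≤ N: ‖e_u^m‖_U + ‖e_p^m‖_Q + |||e_z^m||| ≤ C·( ‖e_u^0‖_U + c₀^{1/2}·‖e_p^0‖_Q + (τ/κ)^{1/2}·‖e_z^0‖_{W0} + (Σ_{j=1}^{N} (τ/κ)·‖ρ_z^j‖_{W0}²)^{1/2} + τ^{1/2}·Σ_{j=1}^{N} κ^{−1/2}·‖ρ_z^j − ρ_z^{j−1}‖_{W0} + Σ_{j=1}^{N} τ·‖R^j‖_Q ), where |||z|||² = (τ/κ)‖z‖_{W0}² + τ²‖D_W z‖_Q². -/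

import Mathlib

open scoped RealInnerProductSpace
open Finset

lemma biot_tele_aux (f : ℕ → ℝ) (n : ℕ) : ∑ j ∈ Icc 1 n, (f j - f (j-1)) = f n - f 0 := by
  induction n with
  | zero => simp
  | succ n ih =>
    rw [Finset.sum_Icc_succ_top (by omega : 1 ≤ n + 1), ih]
    simp

lemma biot_sqrt_sq_add_sq_le (x y : ℝ) (hx : 0 ≤ x) (hy : 0 ≤ y) :
    Real.sqrt (x^2 + y^2) ≤ x + y := by
  have h : x^2 + y^2 ≤ (x+y)^2 := by nlinarith
  calc Real.sqrt (x^2 + y^2) ≤ Real.sqrt ((x+y)^2) := Real.sqrt_le_sqrt h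
    _ = x + y := Real.sqrt_sq (by linarith)

lemma biot_le_of_sq_le_sq (a b : ℝ) (ha : 0 ≤ a) (hb : 0 ≤ b) (h : a^2 ≤ b^2) : a ≤ b := by
  nlinarith

set_option maxHeartbeats 2000000 in
theorem biot_full_error_estimate {U W Q : Type*}
    [NormedAddCommGroup U] [InnerProductSpace ℝ U] [FiniteDimensional ℝ U]
    [NormedAddCommGroup W] [InnerProductSpace ℝ W] [FiniteDimensional ℝ W]
    [NormedAddCommGroup Q] [InnerProductSpace ℝ Q] [FiniteDimensional ℝ Q]
    (γa Ca Cb βS : ℝ) (hγa : 0 < γa) (hCa : 0 < Ca) (hCb : 0 < Cb) (hβS : 0 < βS) :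
    ∃ C : ℝ, 0 < C ∧
      ∀ (τ κ c₀ : ℝ), 0 < τ → 0 < κ → κ ≤ 1 → 0 ≤ c₀ → c₀ < 1 →
      ∀ (a : U →ₗ[ℝ] U →ₗ[ℝ] ℝ) (DU : U →ₗ[ℝ] Q) (DW : W →ₗ[ℝ] Q),
        (∀ u v : U, a u v = a v u) →
        (∀ u : U, γa * ‖u‖ ^ 2 ≤ a u u) →
        (∀ u v : U, |a u v| ≤ Ca * ‖u‖ * ‖v‖) →
        (∀ v : U, ‖DU v‖ ≤ Cb * ‖v‖) →
        (∀ q : Q, βS * ‖q‖ ≤ ⨆ v : {v : U // v ≠ 0}, ⟪DU (v : U), q⟫ / ‖(v : U)‖) →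
      ∀ (N : ℕ), 1 ≤ N →
      ∀ (eu : ℕ → U) (ez : ℕ → W) (ep : ℕ → Q) (ρz : ℕ → W) (R : ℕ → Q),
        (∀ m ≤ N, ∀ v : U, a (eu m) v + ⟪DU v, ep m⟫ = 0) →
        (∀ m ≤ N, ∀ w : W, κ⁻¹ * ⟪ez m, w⟫ + ⟪DW w, ep m⟫ = κ⁻¹ * ⟪ρz m, w⟫) →
        (∀ m, 1 ≤ m → m ≤ N → ∀ q : Q,
          ⟪DU (τ⁻¹ • (eu m - eu (m - 1))), q⟫ + ⟪DW (ez m), q⟫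
            - c₀ * ⟪τ⁻¹ • (ep m - ep (m - 1)), q⟫ = ⟪R m, q⟫) →
      ∀ m, 1 ≤ m → m ≤ N →
        ‖eu m‖ + ‖ep m‖
            + Real.sqrt ((τ / κ) * ‖ez m‖ ^ 2 + τ ^ 2 * ‖DW (ez m)‖ ^ 2) ≤
          C * (‖eu 0‖ + Real.sqrt c₀ * ‖ep 0‖ + Real.sqrt (τ / κ) * ‖ez 0‖
            + Real.sqrt (∑ j ∈ Icc 1 N, (τ / κ) * ‖ρz j‖ ^ 2)
            + Real.sqrt τ * ∑ j ∈ Icc 1 N, (Real.sqrt κ)⁻¹ * ‖ρz j - ρz (j - 1)‖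
            + ∑ j ∈ Icc 1 N, τ * ‖R j‖) := by
  set cp := Ca / βS with hcpdef
  have hcp0 : 0 ≤ cp := by rw [hcpdef]; positivity
  set c1 := (2*(Ca+2)*γa + 4*cp^2)/γa^2 with hc1def
  have hc10 : 0 ≤ c1 := by rw [hc1def]; positivity
  set K₁ := 1 + Real.sqrt c1 with hK₁def
  have hK₁1 : 1 ≤ K₁ := by rw [hK₁def]; nlinarith [Real.sqrt_nonneg c1]
  have hK₁0 : 0 ≤ K₁ := by linarith
  set K₂ := (Ca+2) + 2*cp*K₁ with hK₂def
  have hK₂0 : 0 ≤ K₂ := by rw [hK₂def]; positivity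
  set K₃ := 1 + 2*Real.sqrt K₂ + cp^2/γa with hK₃def
  have hK₃0 : 0 ≤ K₃ := by rw [hK₃def]; positivity
  set K₄ := Real.sqrt (K₃/γa) with hK₄def
  have hK₄0 : 0 ≤ K₄ := Real.sqrt_nonneg _
  have hsK₂ : 0 ≤ Real.sqrt K₂ := Real.sqrt_nonneg _
  clear_value cp c1 K₁ K₂ K₃ K₄
  refine ⟨K₁*(1+cp) + Real.sqrt K₂ + 1 + (Cb+cp)*K₄, by
    nlinarith [mul_nonneg hK₁0 (by linarith : (0:ℝ) ≤ 1+cp),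
      mul_nonneg (by linarith : (0:ℝ) ≤ Cb+cp) hK₄0, hsK₂], ?_⟩
  intro τ κ c₀ hτ hκ hκ1 hc₀ hc₀1 a DU DW hsym hcoer hbound hDU hinf
  intro N hN eu ez ep ρz R h1 h2 h3 m hm1 hmN
  -- pressure estimate from inf-sup
  have hp : ∀ (x : U) (p : Q), (∀ v : U, a x v + ⟪DU v, p⟫ = 0) → ‖p‖ ≤ cp * ‖x‖ := by
    intro x p h
    have hsup : (⨆ v : {v : U // v ≠ 0}, ⟪DU (v : U), p⟫ / ‖(v : U)‖) ≤ Ca * ‖x‖ := by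
      by_cases hne : Nonempty {v : U // v ≠ 0}
      · apply Real.iSup_le _ (by positivity)
        intro v
        have hv : 0 < ‖(v : U)‖ := norm_pos_iff.mpr v.2
        rw [div_le_iff₀ hv]
        have h1' := h v
        have h2' := hbound x v
        have h3' : -(a x (v:U)) ≤ |a x (v:U)| := neg_le_abs _
        linarith
      · rw [not_nonempty_iff] at hne
        rw [Real.iSup_of_isEmpty]
        positivity
    have := le_trans (hinf p) hsup
    rw [hcpdef, div_mul_eq_mul_div, le_div_iff₀ hβS]
    linarith
  have hep : ∀ n, n ≤ N → ‖ep n‖ ≤ cp * ‖eu n‖ := fun n hn => hp _ _ (h1 n hn)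
  -- clean form of h3
  have h3' : ∀ n, 1 ≤ n → n ≤ N → ∀ q : Q,
      ⟪DU (eu n - eu (n-1)), q⟫ + τ * ⟪DW (ez n), q⟫ - c₀ * ⟪ep n - ep (n-1), q⟫
        = τ * ⟪R n, q⟫ := by
    intro n hn1 hn2 q
    have H := h3 n hn1 hn2 q
    rw [map_smul, real_inner_smul_left, real_inner_smul_left] at H
    field_simp at H
    simp only [map_sub, inner_sub_left] at H ⊢
    linarith only [H]
  -- difference forms
  have hδ1 : ∀ n, 1 ≤ n → n ≤ N → ∀ v : U,
      a (eu n - eu (n-1)) v + ⟪DU v, ep n - ep (n-1)⟫ = 0 := by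
    intro n hn1 hn2 v
    have A := h1 n hn2 v
    have B := h1 (n-1) (le_trans (Nat.sub_le n 1) hn2) v
    simp only [map_sub, LinearMap.sub_apply, inner_sub_right]
    linarith only [A, B]
  have hδ2 : ∀ n, 1 ≤ n → n ≤ N → ∀ w : W,
      κ⁻¹ * ⟪ez n - ez (n-1), w⟫ + ⟪DW w, ep n - ep (n-1)⟫
        = κ⁻¹ * ⟪ρz n - ρz (n-1), w⟫ := by
    intro n hn1 hn2 w
    have A := h2 n hn2 w
    have B := h2 (n-1) (le_trans (Nat.sub_le n 1) hn2) w
    rw [inner_sub_left, inner_sub_left, inner_sub_right]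
    ring_nf
    ring_nf at A B
    linarith only [A, B]
  -- energy identity E1
  have E1 : ∀ n, 1 ≤ n → n ≤ N →
      a (eu n) (eu n - eu (n-1)) + c₀ * ⟪ep n - ep (n-1), ep n⟫ + (τ/κ) * ‖ez n‖^2
        = (τ/κ) * ⟪ρz n, ez n⟫ - τ * ⟪R n, ep n⟫ := by
    intro n hn1 hn2
    have A := h1 n hn2 (eu n - eu (n-1))
    have B := h2 n hn2 (ez n)
    rw [real_inner_self_eq_norm_sq] at B
    have Cq := h3' n hn1 hn2 (ep n)
    linear_combination τ * B - Cq + A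
  -- energy identity E2
  have E2 : ∀ n, 1 ≤ n → n ≤ N →
      a (eu n - eu (n-1)) (eu n - eu (n-1)) + c₀ * ‖ep n - ep (n-1)‖^2
        + (τ/κ) * ⟪ez n - ez (n-1), ez n⟫
        = (τ/κ) * ⟪ρz n - ρz (n-1), ez n⟫ - τ * ⟪R n, ep n - ep (n-1)⟫ := by
    intro n hn1 hn2
    have A := hδ1 n hn1 hn2 (eu n - eu (n-1))
    have B := hδ2 n hn1 hn2 (ez n)
    have Cq := h3' n hn1 hn2 (ep n - ep (n-1))
    rw [real_inner_self_eq_norm_sq] at Cq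
    linear_combination τ * B - Cq + A
  -- the data quantity S
  set S := ‖eu 0‖ + Real.sqrt c₀ * ‖ep 0‖ + Real.sqrt (τ / κ) * ‖ez 0‖
      + Real.sqrt (∑ j ∈ Icc 1 N, (τ / κ) * ‖ρz j‖ ^ 2)
      + Real.sqrt τ * ∑ j ∈ Icc 1 N, (Real.sqrt κ)⁻¹ * ‖ρz j - ρz (j - 1)‖
      + ∑ j ∈ Icc 1 N, τ * ‖R j‖ with hSdef
  have t1 : (0:ℝ) ≤ ‖eu 0‖ := norm_nonneg _
  have t2 : (0:ℝ) ≤ Real.sqrt c₀ * ‖ep 0‖ := by positivity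
  have t3 : (0:ℝ) ≤ Real.sqrt (τ / κ) * ‖ez 0‖ := by positivity
  have t4 : (0:ℝ) ≤ Real.sqrt (∑ j ∈ Icc 1 N, (τ / κ) * ‖ρz j‖ ^ 2) := Real.sqrt_nonneg _
  have t5 : (0:ℝ) ≤ Real.sqrt τ * ∑ j ∈ Icc 1 N, (Real.sqrt κ)⁻¹ * ‖ρz j - ρz (j - 1)‖ := by
    apply mul_nonneg (Real.sqrt_nonneg _)
    exact Finset.sum_nonneg fun i _ => by positivity
  have t6 : (0:ℝ) ≤ ∑ j ∈ Icc 1 N, τ * ‖R j‖ := Finset.sum_nonneg fun i _ => by positivity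
  have hS0 : 0 ≤ S := by rw [hSdef]; linarith
  have hA1 : ‖eu 0‖ ≤ S := by rw [hSdef]; linarith
  have hA2 : Real.sqrt c₀ * ‖ep 0‖ ≤ S := by rw [hSdef]; linarith
  have hA3 : Real.sqrt (τ / κ) * ‖ez 0‖ ≤ S := by rw [hSdef]; linarith
  have hA4 : Real.sqrt (∑ j ∈ Icc 1 N, (τ / κ) * ‖ρz j‖ ^ 2) ≤ S := by rw [hSdef]; linarith
  have hA5 : Real.sqrt τ * ∑ j ∈ Icc 1 N, (Real.sqrt κ)⁻¹ * ‖ρz j - ρz (j - 1)‖ ≤ S := by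
    rw [hSdef]; linarith
  have hA6 : ∑ j ∈ Icc 1 N, τ * ‖R j‖ ≤ S := by rw [hSdef]; linarith
  clear_value S
  -- squared data bounds
  have heu0sq : ‖eu 0‖^2 ≤ S^2 := pow_le_pow_left₀ t1 hA1 2
  have hep0sq : c₀ * ‖ep 0‖^2 ≤ S^2 := by
    have h := pow_le_pow_left₀ t2 hA2 2
    rw [mul_pow, Real.sq_sqrt hc₀] at h
    exact h
  have hez0sq : (τ/κ) * ‖ez 0‖^2 ≤ S^2 := by
    have h := pow_le_pow_left₀ t3 hA3 2
    rw [mul_pow, Real.sq_sqrt (by positivity : (0:ℝ) ≤ τ/κ)] at h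
    exact h
  have hρsq : ∑ j ∈ Icc 1 N, (τ / κ) * ‖ρz j‖ ^ 2 ≤ S^2 := by
    have hnn : (0:ℝ) ≤ ∑ j ∈ Icc 1 N, (τ / κ) * ‖ρz j‖ ^ 2 :=
      Finset.sum_nonneg fun i _ => by positivity
    have h := pow_le_pow_left₀ t4 hA4 2
    rw [Real.sq_sqrt hnn] at h
    exact h
  have hR2 : ∑ j ∈ Icc 1 N, (τ * ‖R j‖)^2 ≤ S^2 := by
    refine le_trans (Finset.sum_sq_le_sq_sum_of_nonneg fun i _ => by positivity) ?_
    exact pow_le_pow_left₀ t6 hA6 2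
  have hδρS : ∑ j ∈ Icc 1 N, Real.sqrt τ * ((Real.sqrt κ)⁻¹ * ‖ρz j - ρz (j - 1)‖) ≤ S := by
    rw [← Finset.mul_sum]
    exact hA5
  -- the max of ‖eu j‖
  have hne : (Icc 0 N).Nonempty := ⟨0, by simp⟩
  set X := (Icc 0 N).sup' hne (fun j => ‖eu j‖) with hXdef
  have hXge : ∀ j, j ≤ N → ‖eu j‖ ≤ X := fun j hj =>
    Finset.le_sup' (f := fun i => ‖eu i‖) (Finset.mem_Icc.mpr ⟨Nat.zero_le _, hj⟩)
  have hX0 : 0 ≤ X := le_trans (norm_nonneg (eu 0)) (hXge 0 (Nat.zero_le _))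
  obtain ⟨n₀, hn₀mem, hXeq0⟩ := Finset.exists_mem_eq_sup' hne (fun j => ‖eu j‖)
  have hXeq : X = ‖eu n₀‖ := by rw [hXdef]; exact hXeq0
  clear_value X
  -- first summed energy estimate
  have star : ∀ n, 1 ≤ n → n ≤ N →
      γa*‖eu n‖^2 + ∑ j ∈ Icc 1 n, (τ/κ)*‖ez j‖^2 ≤ (Ca+2)*S^2 + 2*cp*S*X := by
    intro n hn1 hn2
    have point : ∀ j ∈ Icc 1 n,
        (a (eu j) (eu j) + c₀*‖ep j‖^2) - (a (eu (j-1)) (eu (j-1)) + c₀*‖ep (j-1)‖^2)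
          + (τ/κ)*‖ez j‖^2 ≤ (τ/κ)*‖ρz j‖^2 + 2*cp*X*(τ*‖R j‖) := by
      intro j hj
      rw [Finset.mem_Icc] at hj
      have hjN : j ≤ N := le_trans hj.2 hn2
      have e1 := E1 j hj.1 hjN
      have hq : 0 ≤ a (eu j - eu (j-1)) (eu j - eu (j-1)) :=
        le_trans (by positivity) (hcoer _)
      have hexp : a (eu j - eu (j-1)) (eu j - eu (j-1))
          = a (eu j) (eu j) - 2*(a (eu j) (eu (j-1))) + a (eu (j-1)) (eu (j-1)) := by
        simp only [map_sub, LinearMap.sub_apply]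
        rw [hsym (eu (j-1)) (eu j)]
        ring
      have hδa : a (eu j) (eu j - eu (j-1)) = a (eu j) (eu j) - a (eu j) (eu (j-1)) :=
        map_sub _ _ _
      have ha2 : a (eu j) (eu j) - a (eu (j-1)) (eu (j-1)) ≤ 2 * a (eu j) (eu j - eu (j-1)) := by
        rw [hδa]; linarith
      have hpexp := norm_sub_sq_real (ep j) (ep j - ep (j-1))
      rw [sub_sub_cancel] at hpexp
      have hp2 : ‖ep j‖^2 - ‖ep (j-1)‖^2 ≤ 2*⟪ep j - ep (j-1), ep j⟫ := by
        rw [real_inner_comm]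
        linarith only [hpexp, sq_nonneg ‖ep j - ep (j-1)‖]
      have hp2c : c₀*(‖ep j‖^2 - ‖ep (j-1)‖^2) ≤ c₀*(2*⟪ep j - ep (j-1), ep j⟫) :=
        mul_le_mul_of_nonneg_left hp2 hc₀
      have hρ : (τ/κ)*⟪ρz j, ez j⟫ ≤ (τ/κ)*(‖ρz j‖^2/2 + ‖ez j‖^2/2) := by
        apply mul_le_mul_of_nonneg_left _ (by positivity : (0:ℝ) ≤ τ/κ)
        linarith only [real_inner_le_norm (ρz j) (ez j), sq_nonneg (‖ρz j‖ - ‖ez j‖)]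
      have hRb : -(τ*⟪R j, ep j⟫) ≤ cp*X*(τ*‖R j‖) := by
        have h1' : -⟪R j, ep j⟫ ≤ ‖R j‖*‖ep j‖ := by
          have u1 := abs_real_inner_le_norm (R j) (ep j)
          have u2 := neg_abs_le ⟪R j, ep j⟫
          linarith only [u1, u2]
        have h2' : ‖ep j‖ ≤ cp * X :=
          le_trans (hep j hjN) (mul_le_mul_of_nonneg_left (hXge j hjN) hcp0)
        calc -(τ*⟪R j, ep j⟫) = τ*(-⟪R j, ep j⟫) := by ring
          _ ≤ τ*(‖R j‖*(cp*X)) := by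
              apply mul_le_mul_of_nonneg_left _ hτ.le
              exact le_trans h1' (mul_le_mul_of_nonneg_left h2' (norm_nonneg _))
          _ = cp*X*(τ*‖R j‖) := by ring
      linarith only [e1, hq, hexp, ha2, hp2c, hρ, hRb]
    have hsum := Finset.sum_le_sum point
    rw [Finset.sum_add_distrib, Finset.sum_add_distrib,
      biot_tele_aux (fun i => a (eu i) (eu i) + c₀*‖ep i‖^2) n] at hsum
    have hsub : Icc 1 n ⊆ Icc 1 N := Finset.Icc_subset_Icc_right hn2
    have hρext : ∑ j ∈ Icc 1 n, (τ/κ)*‖ρz j‖^2 ≤ ∑ j ∈ Icc 1 N, (τ/κ)*‖ρz j‖^2 :=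
      Finset.sum_le_sum_of_subset_of_nonneg hsub (fun i _ _ => by positivity)
    have hRext : ∑ j ∈ Icc 1 n, τ*‖R j‖ ≤ ∑ j ∈ Icc 1 N, τ*‖R j‖ :=
      Finset.sum_le_sum_of_subset_of_nonneg hsub (fun i _ _ => by positivity)
    have hF0 : a (eu 0) (eu 0) + c₀*‖ep 0‖^2 ≤ Ca*‖eu 0‖^2 + c₀*‖ep 0‖^2 := by
      have hb := hbound (eu 0) (eu 0)
      have hla := le_abs_self (a (eu 0) (eu 0))
      linarith only [hb, hla]
    have hFn : γa*‖eu n‖^2 ≤ a (eu n) (eu n) + c₀*‖ep n‖^2 := by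
      linarith only [hcoer (eu n), mul_nonneg hc₀ (sq_nonneg ‖ep n‖)]
    have hca : Ca*‖eu 0‖^2 ≤ Ca*S^2 := mul_le_mul_of_nonneg_left heu0sq hCa.le
    have hRX : ∑ x ∈ Icc 1 n, 2*cp*X*(τ*‖R x‖) ≤ 2*cp*X*S := by
      rw [← Finset.mul_sum]
      exact mul_le_mul_of_nonneg_left (le_trans hRext hA6)
        (mul_nonneg (mul_nonneg (by norm_num) hcp0) hX0)
    linarith only [hsum, le_trans hρext hρsq, hF0, hFn, hca, hep0sq, hRX]
  -- the max bound
  have hXS : X ≤ K₁*S := by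
    rw [Finset.mem_Icc] at hn₀mem
    by_cases h0 : n₀ = 0
    · have hx : X = ‖eu 0‖ := by rw [hXeq, h0]
      have h1S := mul_le_mul_of_nonneg_right hK₁1 hS0
      rw [one_mul] at h1S
      linarith only [hx, hA1, h1S]
    · have hn₀1 : 1 ≤ n₀ := Nat.one_le_iff_ne_zero.mpr h0
      have hst := star n₀ hn₀1 hn₀mem.2
      have hsum0 : 0 ≤ ∑ j ∈ Icc 1 n₀, (τ/κ)*‖ez j‖^2 :=
        Finset.sum_nonneg fun i _ => by positivity
      have hx2 : γa*X^2 ≤ (Ca+2)*S^2 + 2*cp*S*X := by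
        rw [← hXeq] at hst
        linarith only [hst, hsum0]
      have hx3 : X^2 ≤ c1*S^2 := by
        rw [hc1def, div_mul_eq_mul_div, le_div_iff₀ (by positivity : (0:ℝ) < γa^2)]
        linarith only [mul_le_mul_of_nonneg_left hx2 hγa.le, sq_nonneg (γa*X - 2*cp*S)]
      have hx4 : X ≤ Real.sqrt c1 * S := by
        have h := Real.sqrt_le_sqrt hx3
        rw [Real.sqrt_sq hX0, Real.sqrt_mul hc10, Real.sqrt_sq hS0] at h
        exact h
      rw [hK₁def]
      linarith only [hx4, hS0]
  -- pointwise flux bound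
  have hez2 : ∀ n, 1 ≤ n → n ≤ N → (τ/κ)*‖ez n‖^2 ≤ K₂*S^2 := by
    intro n hn1 hn2
    have hst := star n hn1 hn2
    have hsingle : (τ/κ)*‖ez n‖^2 ≤ ∑ j ∈ Icc 1 n, (τ/κ)*‖ez j‖^2 :=
      Finset.single_le_sum (f := fun j => (τ/κ)*‖ez j‖^2) (fun i _ => by positivity)
        (Finset.mem_Icc.mpr ⟨hn1, le_refl n⟩)
    have hxx : 2*cp*S*X ≤ 2*cp*S*(K₁*S) :=
      mul_le_mul_of_nonneg_left hXS (mul_nonneg (mul_nonneg (by norm_num) hcp0) hS0)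
    rw [hK₂def]
    linarith only [hst, hsingle, hxx, mul_nonneg hγa.le (sq_nonneg ‖eu n‖)]
  have hezS : ∀ n, 1 ≤ n → n ≤ N → Real.sqrt (τ/κ) * ‖ez n‖ ≤ Real.sqrt K₂ * S := by
    intro n hn1 hn2
    apply biot_le_of_sq_le_sq _ _ (by positivity) (mul_nonneg (Real.sqrt_nonneg _) hS0)
    rw [mul_pow, mul_pow, Real.sq_sqrt (by positivity : (0:ℝ) ≤ τ/κ), Real.sq_sqrt hK₂0]
    exact hez2 n hn1 hn2
  -- Young auxiliary
  have young : ∀ d t : ℝ, 2*(cp*t)*d ≤ γa*d^2 + (cp^2/γa)*t^2 := by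
    intro d t
    have h := sq_nonneg (γa*d - cp*t)
    have h2 : 0 ≤ (γa*d - cp*t)^2 / γa := div_nonneg h hγa.le
    have h3 : (γa*d - cp*t)^2 / γa = γa*d^2 - 2*(cp*t)*d + (cp^2/γa)*t^2 := by
      field_simp
      ring
    linarith only [h2, h3]
  -- second summed energy estimate (at the target index m)
  have star2 : γa*‖eu m - eu (m-1)‖^2 ≤ K₃*S^2 := by
    have point2 : ∀ j ∈ Icc 1 m,
        γa*‖eu j - eu (j-1)‖^2 + ((τ/κ)*‖ez j‖^2 - (τ/κ)*‖ez (j-1)‖^2)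
          ≤ 2*(Real.sqrt K₂ * S)*(Real.sqrt τ * ((Real.sqrt κ)⁻¹ * ‖ρz j - ρz (j-1)‖))
            + (cp^2/γa)*(τ*‖R j‖)^2 := by
      intro j hj
      rw [Finset.mem_Icc] at hj
      have hjN : j ≤ N := le_trans hj.2 hmN
      have e2 := E2 j hj.1 hjN
      have hcoerδ := hcoer (eu j - eu (j-1))
      have hz : ‖ez j‖^2 - ‖ez (j-1)‖^2 ≤ 2*⟪ez j - ez (j-1), ez j⟫ := by
        have h := norm_sub_sq_real (ez j) (ez j - ez (j-1))
        rw [sub_sub_cancel] at h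
        rw [real_inner_comm]
        linarith only [h, sq_nonneg ‖ez j - ez (j-1)‖]
      have hzc : (τ/κ)*(‖ez j‖^2 - ‖ez (j-1)‖^2) ≤ (τ/κ)*(2*⟪ez j - ez (j-1), ez j⟫) :=
        mul_le_mul_of_nonneg_left hz (by positivity)
      have hsplit : Real.sqrt (τ/κ) = Real.sqrt τ * (Real.sqrt κ)⁻¹ := by
        rw [Real.sqrt_div hτ.le, div_eq_mul_inv]
      have hρ1 : (τ/κ)*⟪ρz j - ρz (j-1), ez j⟫
          ≤ (Real.sqrt τ * ((Real.sqrt κ)⁻¹ * ‖ρz j - ρz (j-1)‖)) * (Real.sqrt (τ/κ) * ‖ez j‖) := by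
        have hinner := real_inner_le_norm (ρz j - ρz (j-1)) (ez j)
        calc (τ/κ)*⟪ρz j - ρz (j-1), ez j⟫
            ≤ (τ/κ)*(‖ρz j - ρz (j-1)‖*‖ez j‖) :=
              mul_le_mul_of_nonneg_left hinner (by positivity)
          _ = (Real.sqrt (τ/κ))^2*(‖ρz j - ρz (j-1)‖*‖ez j‖) := by
              rw [Real.sq_sqrt (by positivity : (0:ℝ) ≤ τ/κ)]
          _ = (Real.sqrt τ * ((Real.sqrt κ)⁻¹ * ‖ρz j - ρz (j-1)‖)) * (Real.sqrt (τ/κ) * ‖ez j‖) := by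
              rw [hsplit]; ring
      have hρ2 : (Real.sqrt τ * ((Real.sqrt κ)⁻¹ * ‖ρz j - ρz (j-1)‖)) * (Real.sqrt (τ/κ) * ‖ez j‖)
          ≤ (Real.sqrt τ * ((Real.sqrt κ)⁻¹ * ‖ρz j - ρz (j-1)‖)) * (Real.sqrt K₂ * S) :=
        mul_le_mul_of_nonneg_left (hezS j hj.1 hjN) (by positivity)
      have hδpj : ‖ep j - ep (j-1)‖ ≤ cp*‖eu j - eu (j-1)‖ := hp _ _ (hδ1 j hj.1 hjN)
      have hRy : -(τ*⟪R j, ep j - ep (j-1)⟫) ≤ (cp*(τ*‖R j‖))*‖eu j - eu (j-1)‖ := by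
        have h1' : -⟪R j, ep j - ep (j-1)⟫ ≤ ‖R j‖*‖ep j - ep (j-1)‖ := by
          have u1 := abs_real_inner_le_norm (R j) (ep j - ep (j-1))
          have u2 := neg_abs_le ⟪R j, ep j - ep (j-1)⟫
          linarith only [u1, u2]
        calc -(τ*⟪R j, ep j - ep (j-1)⟫) = τ*(-⟪R j, ep j - ep (j-1)⟫) := by ring
          _ ≤ τ*(‖R j‖*(cp*‖eu j - eu (j-1)‖)) := by
              apply mul_le_mul_of_nonneg_left _ hτ.le
              exact le_trans h1' (mul_le_mul_of_nonneg_left hδpj (norm_nonneg _))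
          _ = (cp*(τ*‖R j‖))*‖eu j - eu (j-1)‖ := by ring
      have hY := young ‖eu j - eu (j-1)‖ (τ*‖R j‖)
      have hc₀δ : 0 ≤ c₀*‖ep j - ep (j-1)‖^2 := by positivity
      linarith only [e2, hcoerδ, hzc, le_trans hρ1 hρ2, hRy, hY, hc₀δ]
    have hsum2 := Finset.sum_le_sum point2
    rw [Finset.sum_add_distrib, Finset.sum_add_distrib,
      biot_tele_aux (fun i => (τ/κ)*‖ez i‖^2) m] at hsum2
    have hsub : Icc 1 m ⊆ Icc 1 N := Finset.Icc_subset_Icc_right hmN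
    have hρext : ∑ j ∈ Icc 1 m, Real.sqrt τ * ((Real.sqrt κ)⁻¹ * ‖ρz j - ρz (j-1)‖)
        ≤ ∑ j ∈ Icc 1 N, Real.sqrt τ * ((Real.sqrt κ)⁻¹ * ‖ρz j - ρz (j-1)‖) :=
      Finset.sum_le_sum_of_subset_of_nonneg hsub (fun i _ _ => by positivity)
    have hRext : ∑ j ∈ Icc 1 m, (τ*‖R j‖)^2 ≤ ∑ j ∈ Icc 1 N, (τ*‖R j‖)^2 :=
      Finset.sum_le_sum_of_subset_of_nonneg hsub (fun i _ _ => by positivity)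
    have hsingle : γa*‖eu m - eu (m-1)‖^2 ≤ ∑ j ∈ Icc 1 m, γa*‖eu j - eu (j-1)‖^2 :=
      Finset.single_le_sum (f := fun j => γa*‖eu j - eu (j-1)‖^2) (fun i _ => by positivity)
        (Finset.mem_Icc.mpr ⟨hm1, le_refl m⟩)
    have hgm : 0 ≤ (τ/κ)*‖ez m‖^2 := by positivity
    have hmul1 : ∑ j ∈ Icc 1 m, 2*(Real.sqrt K₂ * S)*(Real.sqrt τ * ((Real.sqrt κ)⁻¹ * ‖ρz j - ρz (j-1)‖))
        ≤ 2*(Real.sqrt K₂ * S)*S := by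
      rw [← Finset.mul_sum]
      exact mul_le_mul_of_nonneg_left (le_trans hρext hδρS)
        (mul_nonneg (by norm_num) (mul_nonneg (Real.sqrt_nonneg _) hS0))
    have hmul2 : ∑ j ∈ Icc 1 m, (cp^2/γa)*(τ*‖R j‖)^2 ≤ (cp^2/γa)*S^2 := by
      rw [← Finset.mul_sum]
      exact mul_le_mul_of_nonneg_left (le_trans hRext hR2) (div_nonneg (sq_nonneg cp) hγa.le)
    rw [hK₃def]
    linarith only [hsum2, hsingle, hgm, hez0sq, hmul1, hmul2]
  have hδum : ‖eu m - eu (m-1)‖ ≤ K₄*S := by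
    apply biot_le_of_sq_le_sq _ _ (norm_nonneg _) (mul_nonneg hK₄0 hS0)
    rw [mul_pow, hK₄def, Real.sq_sqrt (div_nonneg hK₃0 hγa.le),
      div_mul_eq_mul_div, le_div_iff₀ hγa]
    linarith only [star2]
  -- bound on τ‖DW ez m‖
  have hvec : τ • DW (ez m) = τ • R m - DU (eu m - eu (m-1)) + c₀ • (ep m - ep (m-1)) := by
    apply ext_inner_right ℝ
    intro q
    have H := h3' m hm1 hmN q
    simp only [inner_add_left, inner_sub_left, real_inner_smul_left] at H ⊢
    linarith only [H]
  have hDWm : τ*‖DW (ez m)‖ ≤ (1 + (Cb + cp)*K₄)*S := by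
    have h1' : τ*‖DW (ez m)‖ = ‖τ • DW (ez m)‖ := by
      rw [norm_smul, Real.norm_eq_abs, abs_of_pos hτ]
    have htri : ‖τ • R m - DU (eu m - eu (m-1)) + c₀ • (ep m - ep (m-1))‖
        ≤ ‖τ • R m‖ + ‖DU (eu m - eu (m-1))‖ + ‖c₀ • (ep m - ep (m-1))‖ := by
      calc ‖τ • R m - DU (eu m - eu (m-1)) + c₀ • (ep m - ep (m-1))‖
          ≤ ‖τ • R m - DU (eu m - eu (m-1))‖ + ‖c₀ • (ep m - ep (m-1))‖ := norm_add_le _ _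
        _ ≤ ‖τ • R m‖ + ‖DU (eu m - eu (m-1))‖ + ‖c₀ • (ep m - ep (m-1))‖ := by
            linarith [norm_sub_le (τ • R m) (DU (eu m - eu (m-1)))]
    have e1 : ‖τ • R m‖ = τ*‖R m‖ := by rw [norm_smul, Real.norm_eq_abs, abs_of_pos hτ]
    have e2 : ‖c₀ • (ep m - ep (m-1))‖ = c₀*‖ep m - ep (m-1)‖ := by
      rw [norm_smul, Real.norm_eq_abs, abs_of_nonneg hc₀]
    have hRm : τ*‖R m‖ ≤ S := by
      refine le_trans ?_ hA6
      exact Finset.single_le_sum (f := fun j => τ*‖R j‖) (fun i _ => by positivity)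
        (Finset.mem_Icc.mpr ⟨hm1, hmN⟩)
    have hDUb : ‖DU (eu m - eu (m-1))‖ ≤ Cb*(K₄*S) :=
      le_trans (hDU _) (mul_le_mul_of_nonneg_left hδum hCb.le)
    have hδpm : ‖ep m - ep (m-1)‖ ≤ cp*‖eu m - eu (m-1)‖ := hp _ _ (hδ1 m hm1 hmN)
    have hc₀p : c₀*‖ep m - ep (m-1)‖ ≤ cp*(K₄*S) := by
      have h1'' : c₀*‖ep m - ep (m-1)‖ ≤ ‖ep m - ep (m-1)‖ :=
        mul_le_of_le_one_left (norm_nonneg _) hc₀1.le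
      refine le_trans h1'' (le_trans hδpm ?_)
      exact mul_le_mul_of_nonneg_left hδum hcp0
    rw [h1', hvec]
    calc ‖τ • R m - DU (eu m - eu (m-1)) + c₀ • (ep m - ep (m-1))‖
        ≤ ‖τ • R m‖ + ‖DU (eu m - eu (m-1))‖ + ‖c₀ • (ep m - ep (m-1))‖ := htri
      _ ≤ S + Cb*(K₄*S) + cp*(K₄*S) := by rw [e1, e2]; linarith
      _ = (1 + (Cb + cp)*K₄)*S := by ring
  -- final assembly
  have hfin1 : ‖eu m‖ ≤ K₁*S := le_trans (hXge m hmN) hXS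
  have hfin2 : ‖ep m‖ ≤ cp*(K₁*S) :=
    le_trans (hep m hmN) (mul_le_mul_of_nonneg_left hfin1 hcp0)
  have hfin3 : Real.sqrt ((τ / κ) * ‖ez m‖ ^ 2 + τ ^ 2 * ‖DW (ez m)‖ ^ 2)
      ≤ Real.sqrt K₂*S + (1 + (Cb + cp)*K₄)*S := by
    have hxy : (τ/κ) * ‖ez m‖^2 = (Real.sqrt (τ/κ)*‖ez m‖)^2 := by
      rw [mul_pow, Real.sq_sqrt (by positivity : (0:ℝ) ≤ τ/κ)]
    have hyy : τ^2*‖DW (ez m)‖^2 = (τ*‖DW (ez m)‖)^2 := by ring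
    rw [hxy, hyy]
    refine le_trans (biot_sqrt_sq_add_sq_le _ _ (by positivity) (by positivity)) ?_

    have hh := hezS m hm1 hmN
    linarith only [hh, hDWm]
  linarith only [hfin1, hfin2, hfin3]
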